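/- There exists an absolute constant C > 0 such that for all real β with 0 < β ≤ 1, all real Δ ≥ 1, and all real x, one has 0 < m⁻_{β,Δ}(x) and m⁺_{β,Δ}(x) ≤ C/(β·(1 + x²)). -/

import Mathlib

open scoped Real

noncomputable def mPlus (β Δ x : ℝ) : ℝ :=
  (β / (β ^ 2 + x ^ 2)) *
    ((Real.exp (2 * π * β * Δ) + Real.exp (-(2 * π * β * Δ)) - 2 * Real.cos (2 * π * Δ * x)) /
      (Real.exp (π * β * Δ) - Real.exp (-(π * β * Δ))) ^ 2)

noncomputable def mMinus (β Δ x : ℝ) : ℝ :=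
  (β / (β ^ 2 + x ^ 2)) *
    ((Real.exp (2 * π * β * Δ) + Real.exp (-(2 * π * β * Δ)) - 2 * Real.cos (2 * π * Δ * x)) /
      (Real.exp (π * β * Δ) + Real.exp (-(π * β * Δ))) ^ 2)

lemma one_sub_cos_le_half_sq (t : ℝ) : 1 - Real.cos t ≤ t ^ 2 / 2 := by
  have h : Real.cos (2 * (t / 2)) = 2 * Real.cos (t / 2) ^ 2 - 1 := Real.cos_two_mul _
  have h2 : Real.sin (t / 2) ^ 2 + Real.cos (t / 2) ^ 2 = 1 := Real.sin_sq_add_cos_sq _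
  have h3 : Real.sin (t / 2) ^ 2 ≤ (t / 2) ^ 2 := Real.sin_sq_le_sq
  have ht : 2 * (t / 2) = t := by ring
  rw [ht] at h
  nlinarith

set_option maxHeartbeats 1000000 in
theorem real_decay_bounds :
    ∃ C : ℝ, 0 < C ∧ ∀ β Δ x : ℝ, 0 < β → β ≤ 1 → 1 ≤ Δ →
      0 < mMinus β Δ x ∧ mPlus β Δ x ≤ C / (β * (1 + x ^ 2)) := by
  refine ⟨3, by norm_num, fun β Δ x hβ hβ1 hΔ => ?_⟩
  have hπ : (3 : ℝ) < π := Real.pi_gt_three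
  have hΔ0 : (0 : ℝ) < Δ := lt_of_lt_of_le one_pos hΔ
  set a : ℝ := π * β * Δ with ha
  have ha0 : 0 < a := by positivity
  set s : ℝ := Real.exp a - Real.exp (-a) with hs
  have hs0 : 0 < s := by
    have : Real.exp (-a) < Real.exp a := Real.exp_lt_exp.2 (by linarith)
    linarith
  have hs2a : 2 * a ≤ s := by
    have h := (Real.self_lt_sinh_iff).2 ha0
    rw [Real.sinh_eq] at h
    simp only [hs]
    linarith
  -- numerator identity
  have e1 : Real.exp (2 * π * β * Δ) = Real.exp a * Real.exp a := by
    rw [← Real.exp_add, ha]; ring_nf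
  have e2 : Real.exp (-(2 * π * β * Δ)) = Real.exp (-a) * Real.exp (-a) := by
    rw [← Real.exp_add, ha]; ring_nf
  have e3 : Real.exp a * Real.exp (-a) = 1 := by
    rw [← Real.exp_add]; simp
  set u : ℝ := 1 - Real.cos (2 * π * Δ * x) with hu
  have hu0 : 0 ≤ u := by
    have := Real.cos_le_one (2 * π * Δ * x); simp only [hu]; linarith
  have hu2 : u ≤ 2 := by
    have := Real.neg_one_le_cos (2 * π * Δ * x); simp only [hu]; linarith
  set K : ℝ := π ^ 2 * Δ ^ 2 with hK
  have hK1 : 1 ≤ K := by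
    have h9 : 9 ≤ π ^ 2 := by nlinarith
    have hΔ2 : 1 ≤ Δ ^ 2 := by nlinarith
    simp only [hK]; nlinarith
  have huK : u ≤ 2 * K * x ^ 2 := by
    have h := one_sub_cos_le_half_sq (2 * π * Δ * x)
    simp only [hu, hK]
    nlinarith
  have hsK : 4 * β ^ 2 * K ≤ s ^ 2 := by
    have : (2 * a) ^ 2 ≤ s ^ 2 := by nlinarith
    simp only [ha] at this
    nlinarith
  have hNid : Real.exp (2 * π * β * Δ) + Real.exp (-(2 * π * β * Δ)) -
      2 * Real.cos (2 * π * Δ * x) = s ^ 2 + 2 * u := by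
    simp only [hs, hu]
    rw [e1, e2]
    nlinarith
  have hD : (Real.exp (π * β * Δ) - Real.exp (-(π * β * Δ))) ^ 2 = s ^ 2 := by
    simp only [hs, ha]
  clear_value a s u K
  have hden : 0 < β ^ 2 + x ^ 2 :=
    add_pos_of_pos_of_nonneg (pow_pos hβ 2) (sq_nonneg x)
  have hs2 : 0 < s ^ 2 := pow_pos hs0 2
  constructor
  · rw [mMinus, hNid]
    have hP : 0 < Real.exp (π * β * Δ) + Real.exp (-(π * β * Δ)) := by positivity
    have hN : 0 < s ^ 2 + 2 * u := by nlinarith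
    positivity
  · rw [mPlus, hNid]
    rw [hD]
    rw [div_mul_div_comm, div_le_div_iff₀ (by positivity) (by positivity)]
    have hK0 : (0:ℝ) ≤ K := by linarith
    have hb2 : (0:ℝ) ≤ β ^ 2 := sq_nonneg β
    have hx0 : (0:ℝ) ≤ x ^ 2 := sq_nonneg x
    have f1 : β ^ 2 * (1 + x ^ 2) ≤ β ^ 2 + x ^ 2 := by
      nlinarith [mul_nonneg (by nlinarith : (0:ℝ) ≤ 1 - β ^ 2) hx0]
    have t1 : β ^ 2 * (1 + x ^ 2) * s ^ 2 ≤ (β ^ 2 + x ^ 2) * s ^ 2 :=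
      mul_le_mul_of_nonneg_right f1 hs2.le
    have t4 : 2 * (β ^ 2 + x ^ 2) * (4 * β ^ 2 * K) ≤ 2 * (β ^ 2 + x ^ 2) * s ^ 2 :=
      mul_le_mul_of_nonneg_left hsK (by linarith)
    have key : β ^ 2 * (1 + x ^ 2) * (s ^ 2 + 2 * u) ≤ 3 * ((β ^ 2 + x ^ 2) * s ^ 2) := by
      rcases le_or_gt (x ^ 2) 1 with hx | hx
      · have u4 : (1 + x ^ 2) * (2 * u) ≤ 2 * (4 * K * x ^ 2) :=
          mul_le_mul (by linarith) (by linarith) (by linarith) (by norm_num)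
        have t2 : β ^ 2 * ((1 + x ^ 2) * (2 * u)) ≤ β ^ 2 * (2 * (4 * K * x ^ 2)) :=
          mul_le_mul_of_nonneg_left u4 hb2
        nlinarith [mul_nonneg (mul_nonneg hb2 hK0) hb2]
      · have u4 : (1 + x ^ 2) * (2 * u) ≤ 2 * x ^ 2 * 4 :=
          mul_le_mul (by linarith) (by linarith) (by linarith) (by linarith)
        have t2 : β ^ 2 * ((1 + x ^ 2) * (2 * u)) ≤ β ^ 2 * (2 * x ^ 2 * 4) :=
          mul_le_mul_of_nonneg_left u4 hb2
        nlinarith [mul_nonneg (mul_nonneg hb2 hK0) hb2,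
          mul_nonneg (mul_nonneg hb2 hx0) (by linarith : (0:ℝ) ≤ K - 1)]
    linarith [key]
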